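/- Let t, a, b, p ∈ ℂ with t ≠ 0, and let c be the braiding of type R_{1,1} on V = ℂ³ with parameters t, a, b, p. Then the kernel of id_{V⊗V} + c is nonzero if and only if t² = 1. (Since the degree-2 part of the defining ideal of the Nichols algebra of (V, c) equals ker(id + c), this says the Nichols algebra has quadratic relations if and only if t² = 1.) -/

import Mathlib

open TensorProduct

/-- `V = ℂ³`. -/
abbrev V3 : Type := Fin 3 → ℂ

/-- The standard basis vectors `x₁ = xv 0`, `x₂ = xv 1`, `x₃ = xv 2` of `ℂ³`. -/
noncomputable def xv (i : Fin 3) : V3 := Pi.single i 1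

/-- for the braiding `c` of type `R_{1,1}` on `ℂ³` with parameters
`t ≠ 0, a, b, p`, the kernel of `id + c` is nonzero iff `t² = 1`. -/
theorem quadratic_relations_R11_iff (t a b p : ℂ) (ht : t ≠ 0)
    (c : V3 ⊗[ℂ] V3 →ₗ[ℂ] V3 ⊗[ℂ] V3)
    (h11 : c (xv 0 ⊗ₜ[ℂ] xv 0) = t • (xv 0 ⊗ₜ[ℂ] xv 0))
    (h21 : c (xv 1 ⊗ₜ[ℂ] xv 0) = t • (xv 0 ⊗ₜ[ℂ] xv 1))
    (h31 : c (xv 2 ⊗ₜ[ℂ] xv 0) = t • (xv 0 ⊗ₜ[ℂ] xv 2) + (t * a) • (xv 0 ⊗ₜ[ℂ] xv 0))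
    (h12 : c (xv 0 ⊗ₜ[ℂ] xv 1) = t • (xv 1 ⊗ₜ[ℂ] xv 0))
    (h22 : c (xv 1 ⊗ₜ[ℂ] xv 1) = t • (xv 1 ⊗ₜ[ℂ] xv 1))
    (h32 : c (xv 2 ⊗ₜ[ℂ] xv 1) = t • (xv 1 ⊗ₜ[ℂ] xv 2) + (t * a) • (xv 1 ⊗ₜ[ℂ] xv 0)
      + (t * (a - b)) • (xv 0 ⊗ₜ[ℂ] xv 1))
    (h13 : c (xv 0 ⊗ₜ[ℂ] xv 2) = t • (xv 2 ⊗ₜ[ℂ] xv 0) - (t * a) • (xv 0 ⊗ₜ[ℂ] xv 0))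
    (h23 : c (xv 1 ⊗ₜ[ℂ] xv 2) = t • (xv 2 ⊗ₜ[ℂ] xv 1) + (t * (b - a)) • (xv 1 ⊗ₜ[ℂ] xv 0)
      - (t * a) • (xv 0 ⊗ₜ[ℂ] xv 1))
    (h33 : c (xv 2 ⊗ₜ[ℂ] xv 2) = t • (xv 2 ⊗ₜ[ℂ] xv 2) + (t * b) • (xv 2 ⊗ₜ[ℂ] xv 0)
      - (t * p) • (xv 1 ⊗ₜ[ℂ] xv 0) - (t * b) • (xv 0 ⊗ₜ[ℂ] xv 2)
      + (t * p) • (xv 0 ⊗ₜ[ℂ] xv 1) - (t * a * b) • (xv 0 ⊗ₜ[ℂ] xv 0)) :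
    LinearMap.ker (LinearMap.id + c) ≠ ⊥ ↔ t ^ 2 = 1 := by
  set B : Module.Basis (Fin 3 × Fin 3) ℂ (V3 ⊗[ℂ] V3) :=
    Module.Basis.tensorProduct (Pi.basisFun ℂ (Fin 3)) (Pi.basisFun ℂ (Fin 3)) with hB
  have hb : ∀ i j : Fin 3, B (i, j) = xv i ⊗ₜ[ℂ] xv j := by
    intro i j
    rw [hB, Module.Basis.tensorProduct_apply, Pi.basisFun_apply, Pi.basisFun_apply]
    rfl
  -- key identity: c ∘ c = t² • id
  have hsq : ∀ v : V3 ⊗[ℂ] V3, c (c v) = (t ^ 2) • v := by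
    have key : (c ∘ₗ c) = (t ^ 2) • (LinearMap.id : V3 ⊗[ℂ] V3 →ₗ[ℂ] V3 ⊗[ℂ] V3) := by
      apply Module.Basis.ext B
      rintro ⟨i, j⟩
      rw [hb]
      fin_cases i <;> fin_cases j <;>
        simp only [Fin.zero_eta, Fin.mk_one, Fin.reduceFinMk, Fin.isValue,
          LinearMap.comp_apply, LinearMap.smul_apply, LinearMap.id_apply,
          map_add, map_sub, map_smul, h11, h21, h31, h12, h22, h32, h13, h23, h33] <;>
        module
    intro v
    have := LinearMap.congr_fun key v
    simpa using this
  constructor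
  · intro hne
    by_contra ht2
    obtain ⟨v, hv, hv0⟩ := (Submodule.ne_bot_iff _).mp hne
    rw [LinearMap.mem_ker, LinearMap.add_apply, LinearMap.id_apply] at hv
    have hcv : c v = -v := by
      have := hv
      linear_combination (norm := module) hv
    have h1 : (t ^ 2) • v = v := by
      have := hsq v
      rw [hcv, map_neg, hcv, neg_neg] at this
      exact this.symm
    have h2 : (t ^ 2 - 1) • v = 0 := by
      linear_combination (norm := module) h1
    have := smul_eq_zero.mp h2
    rcases this with h | h
    · exact ht2 (by linear_combination h)
    · exact hv0 h
  · intro ht2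
    have hfac : (t - 1) * (t + 1) = 0 := by ring_nf; linear_combination ht2
    rw [Submodule.ne_bot_iff]
    rcases mul_eq_zero.mp hfac with h | h
    · have ht1 : t = 1 := by linear_combination h
      refine ⟨xv 1 ⊗ₜ[ℂ] xv 0 - xv 0 ⊗ₜ[ℂ] xv 1, ?_, ?_⟩
      · rw [LinearMap.mem_ker, LinearMap.add_apply, LinearMap.id_apply, map_sub, h21, h12, ht1]
        module
      · intro h0
        have h0' : (xv 1 ⊗ₜ[ℂ] xv 0 : V3 ⊗[ℂ] V3) = xv 0 ⊗ₜ[ℂ] xv 1 := by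
          linear_combination (norm := module) h0
        have := congrArg (fun w => B.repr w ((1 : Fin 3), (0 : Fin 3))) h0'
        rw [← hb, ← hb] at this
        simp [Module.Basis.repr_self, Finsupp.single_apply] at this
    · have ht1 : t = -1 := by linear_combination h
      refine ⟨xv 0 ⊗ₜ[ℂ] xv 0, ?_, ?_⟩
      · rw [LinearMap.mem_ker, LinearMap.add_apply, LinearMap.id_apply, h11, ht1]
        module
      · rw [← hb]
        exact B.ne_zero _
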